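/- If f : ℝⁿ → ℝ is convex, differentiable, and has L-Lipschitz continuous gradient, then its convex conjugate f* is (1/L)-strongly convex. -/

import Mathlib

open RealInnerProductSpace

section aux
variable {n : ℕ} {L : ℝ} {f : EuclideanSpace ℝ (Fin n) → ℝ}
  {f' : EuclideanSpace ℝ (Fin n) → EuclideanSpace ℝ (Fin n)}

lemma aux_line_deriv (hgrad : ∀ x, HasGradientAt f (f' x) x)
    (x v : EuclideanSpace ℝ (Fin n)) (t : ℝ) :
    HasDerivAt (fun s : ℝ => f (x + s • v)) ⟪f' (x + t • v), v⟫ t := by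
  have hline : HasDerivAt (fun s : ℝ => x + s • v) v t := by
    simpa using ((hasDerivAt_id t).smul_const v).const_add x
  have hf : HasFDerivAt f
      (InnerProductSpace.toDual ℝ _ (f' (x + t • v)) : _ →L[ℝ] ℝ) (x + t • v) :=
    hasGradientAt_iff_hasFDerivAt.mp (hgrad (x + t • v))
  exact (hf.comp_hasDerivAt t hline).congr_deriv (by simp [InnerProductSpace.toDual_apply_apply])

lemma aux_grad_ineq (hgrad : ∀ x, HasGradientAt f (f' x) x)
    (hconv : ConvexOn ℝ Set.univ f) (x y : EuclideanSpace ℝ (Fin n)) :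
    f x + ⟪f' x, y - x⟫ ≤ f y := by
  set φ : ℝ → ℝ := fun t => f (x + t • (y - x)) with hφ
  have hφconv : ConvexOn ℝ Set.univ φ := by
    have h := hconv.comp_affineMap (AffineMap.lineMap x y)
    have heq : (f ∘ ⇑(AffineMap.lineMap x y)) = φ := by
      funext t
      simp [hφ, AffineMap.lineMap_apply, add_comm]
    rw [heq] at h
    simpa using h
  have hd : HasDerivAt φ ⟪f' x, y - x⟫ 0 := by
    simpa using aux_line_deriv hgrad x (y - x) 0
  have hs := hφconv.le_slope_of_hasDerivAt (Set.mem_univ 0) (Set.mem_univ 1) one_pos hd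
  have h0 : φ 0 = f x := by simp [hφ]
  have h1 : φ 1 = f y := by simp [hφ]
  have hslope : slope φ 0 1 = f y - f x := by
    rw [slope_def_field, h0, h1]; norm_num
  rw [hslope] at hs
  linarith

lemma aux_descent (hgrad : ∀ x, HasGradientAt f (f' x) x)
    (hlip : ∀ x y, ‖f' x - f' y‖ ≤ L * ‖x - y‖) (x y : EuclideanSpace ℝ (Fin n)) :
    f y ≤ f x + ⟪f' x, y - x⟫ + L / 2 * ‖y - x‖ ^ 2 := by
  set v := y - x with hv
  set ψ : ℝ → ℝ := fun t => f (x + t • v) - t * ⟪f' x, v⟫ - L / 2 * ‖v‖ ^ 2 * t ^ 2 with hψdef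
  have hψ : ∀ t : ℝ, HasDerivAt ψ
      (⟪f' (x + t • v), v⟫ - ⟪f' x, v⟫ - L / 2 * ‖v‖ ^ 2 * (2 * t)) t := by
    intro t
    have h1 := aux_line_deriv hgrad x v t
    have h2 : HasDerivAt (fun s : ℝ => s * ⟪f' x, v⟫) ⟪f' x, v⟫ t := by
      simpa using (hasDerivAt_id t).mul_const ⟪f' x, v⟫
    have h3 : HasDerivAt (fun s : ℝ => L / 2 * ‖v‖ ^ 2 * s ^ 2)
        (L / 2 * ‖v‖ ^ 2 * (2 * t)) t := by
      have := (hasDerivAt_pow 2 t).const_mul (L / 2 * ‖v‖ ^ 2)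
      simpa [mul_comm, mul_assoc] using this
    exact (h1.sub h2).sub h3
  have hanti : AntitoneOn ψ (Set.Icc 0 1) := by
    apply antitoneOn_of_deriv_nonpos (convex_Icc 0 1)
    · exact fun t _ => ((hψ t).differentiableAt).continuousAt.continuousWithinAt
    · exact fun t _ => ((hψ t).differentiableAt).differentiableWithinAt
    · intro t ht
      rw [interior_Icc] at ht
      rw [(hψ t).deriv]
      have hcs : ⟪f' (x + t • v) - f' x, v⟫ ≤ ‖f' (x + t • v) - f' x‖ * ‖v‖ :=
        real_inner_le_norm _ _
      have hl : ‖f' (x + t • v) - f' x‖ ≤ L * (t * ‖v‖) := by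
        have := hlip (x + t • v) x
        simpa [norm_smul, abs_of_pos ht.1] using this
      have hsub : ⟪f' (x + t • v) - f' x, v⟫ = ⟪f' (x + t • v), v⟫ - ⟪f' x, v⟫ :=
        inner_sub_left _ _ _
      nlinarith [norm_nonneg v, ht.1.le]
  have hle := hanti (Set.left_mem_Icc.mpr zero_le_one) (Set.right_mem_Icc.mpr zero_le_one)
    zero_le_one
  have h0 : ψ 0 = f x := by simp [hψdef]
  have h1 : ψ 1 = f y - ⟪f' x, v⟫ - L / 2 * ‖v‖ ^ 2 := by
    simp [hψdef, hv]
  rw [h0, h1] at hle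
  linarith

end aux

/-- If f is convex, differentiable with L-Lipschitz gradient, then its convex conjugate
f* is (1/L)-strongly convex (in the subgradient sense). -/
theorem conjugate_strongly_convex_of_smooth (n : ℕ) (L : ℝ) (hL : 0 < L)
    (f : EuclideanSpace ℝ (Fin n) → ℝ)
    (f' : EuclideanSpace ℝ (Fin n) → EuclideanSpace ℝ (Fin n))
    (hgrad : ∀ x, HasGradientAt f (f' x) x)
    (hconv : ConvexOn ℝ Set.univ f)
    (hlip : ∀ x y, ‖f' x - f' y‖ ≤ L * ‖x - y‖)
    (fstar : EuclideanSpace ℝ (Fin n) → ℝ)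
    (hfstar : ∀ y, IsLUB {z : ℝ | ∃ x, z = inner ℝ y x - f x} (fstar y)) :
    ∀ y₁ y₂ g : EuclideanSpace ℝ (Fin n),
      (∀ z, fstar z ≥ fstar y₂ + inner ℝ g (z - y₂)) →
      fstar y₁ ≥ fstar y₂ + inner ℝ g (y₁ - y₂) + (1 / (2 * L)) * ‖y₁ - y₂‖ ^ 2 := by
  intro y₁ y₂ g hsub
  have hub : ∀ z x : EuclideanSpace ℝ (Fin n), ⟪z, x⟫ - f x ≤ fstar z :=
    fun z x => (hfstar z).1 ⟨x, rfl⟩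
  -- fstar at a gradient point
  have hfg : fstar (f' g) = ⟪f' g, g⟫ - f g := by
    refine le_antisymm ?_ (hub _ g)
    apply (hfstar (f' g)).2
    rintro z ⟨x, rfl⟩
    have h := aux_grad_ineq hgrad hconv g x
    have hsubr : ⟪f' g, x - g⟫ = ⟪f' g, x⟫ - ⟪f' g, g⟫ := inner_sub_right _ _ _
    linarith
  -- fstar y₂ = ⟪y₂, g⟫ - f g
  have h3 : fstar y₂ = ⟪y₂, g⟫ - f g := by
    refine le_antisymm ?_ (hub y₂ g)
    have h := hsub (f' g)
    rw [hfg] at h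
    have e1 : ⟪g, f' g - y₂⟫ = ⟪f' g, g⟫ - ⟪y₂, g⟫ := by
      rw [inner_sub_right, real_inner_comm g (f' g), real_inner_comm g y₂]
    linarith [h, e1.ge, e1.le]
  -- y₂ = f' g
  have hy₂ : f' g = y₂ := by
    have hmin : IsLocalMin (fun x => f x - ⟪y₂, x⟫) g := by
      apply Filter.Eventually.of_forall
      intro x
      have := hub y₂ x
      rw [h3] at this
      simp only
      linarith
    have hder : HasFDerivAt (fun x => f x - ⟪y₂, x⟫)
        ((InnerProductSpace.toDual ℝ _ (f' g) : _ →L[ℝ] ℝ)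
          - (InnerProductSpace.toDual ℝ _ y₂ : _ →L[ℝ] ℝ)) g := by
      have h1 : HasFDerivAt f (InnerProductSpace.toDual ℝ _ (f' g) : _ →L[ℝ] ℝ) g :=
        hasGradientAt_iff_hasFDerivAt.mp (hgrad g)
      have h2 : HasFDerivAt (fun x : EuclideanSpace ℝ (Fin n) => ⟪y₂, x⟫)
          (InnerProductSpace.toDual ℝ _ y₂ : _ →L[ℝ] ℝ) g := by
        exact (InnerProductSpace.toDual ℝ (EuclideanSpace ℝ (Fin n)) y₂).hasFDerivAt
      exact h1.sub h2
    have hzero := hmin.hasFDerivAt_eq_zero hder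
    have hv : ⟪f' g - y₂, f' g - y₂⟫ = 0 := by
      have := congrFun (congrArg DFunLike.coe hzero) (f' g - y₂)
      simp only [ContinuousLinearMap.sub_apply, ContinuousLinearMap.zero_apply,
        InnerProductSpace.toDual_apply_apply] at this
      rw [inner_sub_left]; exact this
    exact sub_eq_zero.mp (inner_self_eq_zero.mp hv)
  -- final computation
  set u := y₁ - y₂ with hu
  set xs := g + L⁻¹ • u with hxs
  have h4 := hub y₁ xs
  have h5 := aux_descent hgrad hlip g xs
  rw [show xs - g = L⁻¹ • u by rw [hxs]; abel, hy₂] at h5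
  have e1 : ⟪y₂, L⁻¹ • u⟫ = L⁻¹ * ⟪y₂, u⟫ := real_inner_smul_right _ _ _
  have e2 : ‖L⁻¹ • u‖ ^ 2 = L⁻¹ ^ 2 * ‖u‖ ^ 2 := by
    rw [norm_smul, Real.norm_eq_abs, abs_of_pos (inv_pos.mpr hL)]
    ring
  have e3 : ⟪y₁, xs⟫ = ⟪y₁, g⟫ + L⁻¹ * ⟪y₁, u⟫ := by
    rw [hxs, inner_add_right, real_inner_smul_right]
  have e4 : ⟪y₁, u⟫ - ⟪y₂, u⟫ = ‖u‖ ^ 2 := by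
    rw [← inner_sub_left, ← hu, real_inner_self_eq_norm_sq]
  have e5 : (⟪g, u⟫ : ℝ) = ⟪y₁, g⟫ - ⟪y₂, g⟫ := by
    rw [real_inner_comm, hu, inner_sub_left]
  rw [ge_iff_le, h3]
  have hLinv : L / 2 * (L⁻¹ ^ 2 * ‖u‖ ^ 2) = 1 / (2 * L) * ‖u‖ ^ 2 := by
    field_simp
  have hLinv2 : L⁻¹ * ‖u‖ ^ 2 = 1 / (2 * L) * ‖u‖ ^ 2 + 1 / (2 * L) * ‖u‖ ^ 2 := by
    field_simp
    ring
  have e4' : L⁻¹ * ⟪y₁, u⟫ - L⁻¹ * ⟪y₂, u⟫ = L⁻¹ * ‖u‖ ^ 2 := by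
    rw [← mul_sub, e4]
  rw [e1, e2] at h5
  rw [e3] at h4
  linarith [h4, h5, e4', e5, hLinv, hLinv2]
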